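/- Existence of a 1/2-stable fractional matching with welfare at least the optimal stable welfare: for any SMC instance I, there exists a fractional matching μ such that for every pair (m,w), u_m(μ) ≥ (1/2)U(m,w) or v_w(μ) ≥ (1/2)V(m,w), and W(μ) ≥ W(μ*) for every stable fractional matching μ*. (This follows by relaxing the integrality of the stability-indicator variables y(m,w) ∈ {0,1} to y(m,w) ∈ [0,1] in the MILP formulation and using max{y, 1−y} ≥ 1/2.) -/

import Mathlib

open Finset

/-- A fractional matching: nonnegative weights with row and column sums at most 1. -/
def IsFrac {n : ℕ} (μ : Fin n → Fin n → ℝ) : Prop :=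
  (∀ m w, 0 ≤ μ m w) ∧ (∀ m, ∑ w, μ m w ≤ 1) ∧ (∀ w, ∑ m, μ m w ≤ 1)

/-- An integral matching takes values in {0,1}. -/
def IsIntegralM {n : ℕ} (μ : Fin n → Fin n → ℝ) : Prop :=
  ∀ m w, μ m w = 0 ∨ μ m w = 1

/-- A complete (perfect) matching: all row and column sums equal 1. -/
def IsPerfect {n : ℕ} (μ : Fin n → Fin n → ℝ) : Prop :=
  (∀ m, ∑ w, μ m w = 1) ∧ (∀ w, ∑ m, μ m w = 1)

/-- Utility of man `m` under matching `μ`. -/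
def uM {n : ℕ} (U μ : Fin n → Fin n → ℝ) (m : Fin n) : ℝ := ∑ w, U m w * μ m w

/-- Utility of woman `w` under matching `μ`. -/
def vW {n : ℕ} (V μ : Fin n → Fin n → ℝ) (w : Fin n) : ℝ := ∑ m, V m w * μ m w

/-- Stability: no blocking pair. -/
def IsStable {n : ℕ} (U V μ : Fin n → Fin n → ℝ) : Prop :=
  ∀ m w, U m w ≤ uM U μ m ∨ V m w ≤ vW V μ w

/-- Social welfare. -/
def welfare {n : ℕ} (U V μ : Fin n → Fin n → ℝ) : ℝ :=
  (∑ m, uM U μ m) + (∑ w, vW V μ w)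

namespace SMC13

open scoped Classical

variable {n : ℕ} (U V : Fin n → Fin n → ℝ)

/-- Tie-broken preference key of man `m` for woman `w`. -/
noncomputable def keyM (m w : Fin n) : ℝ ×ₗ ℕ := toLex (U m w, (w : ℕ))

/-- Tie-broken preference key of woman `w` for man `m`. -/
noncomputable def keyW (w m : Fin n) : ℝ ×ₗ ℕ := toLex (V m w, (m : ℕ))

lemma keyM_inj {m w w' : Fin n} (h : keyM U m w = keyM U m w') : w = w' := by
  have := (toLex_inj.mp h)
  have h2 : (w : ℕ) = (w' : ℕ) := congrArg Prod.snd this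
  exact Fin.val_injective h2

lemma keyW_inj {w m m' : Fin n} (h : keyW V w m = keyW V w m') : m = m' := by
  have := (toLex_inj.mp h)
  have h2 : (m : ℕ) = (m' : ℕ) := congrArg Prod.snd this
  exact Fin.val_injective h2

lemma keyM_le_val {m w w' : Fin n} (h : keyM U m w' ≤ keyM U m w) : U m w' ≤ U m w := by
  rcases Prod.Lex.le_iff.mp h with h' | h'
  · exact le_of_lt h'
  · exact le_of_eq h'.1

lemma keyW_lt_val {w m m' : Fin n} (h : keyW V w m < keyW V w m') : V m w ≤ V m' w := by
  rcases Prod.Lex.lt_iff.mp h with h' | h'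
  · exact le_of_lt h'
  · exact le_of_eq h'.1

/-- `m` proposes to `w` given rejection set `R`: `w` is `m`'s favorite non-rejected woman. -/
def Proposes (R : Finset (Fin n × Fin n)) (m w : Fin n) : Prop :=
  (m, w) ∉ R ∧ ∀ w', (m, w') ∉ R → keyM U m w' ≤ keyM U m w

/-- `m` is rejected by `w` this round: he proposes but a strictly better proposer exists. -/
def Rej (R : Finset (Fin n × Fin n)) (m w : Fin n) : Prop :=
  Proposes U R m w ∧ ∃ m', Proposes U R m' w ∧ keyW V w m < keyW V w m'

/-- One round of Gale–Shapley: add all rejections. -/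
noncomputable def step (R : Finset (Fin n × Fin n)) : Finset (Fin n × Fin n) :=
  R ∪ Finset.univ.filter (fun p => Rej U V R p.1 p.2)

lemma subset_step (R : Finset (Fin n × Fin n)) : R ⊆ step U V R :=
  Finset.subset_union_left

lemma proposes_unique {R : Finset (Fin n × Fin n)} {m w w' : Fin n}
    (h : Proposes U R m w) (h' : Proposes U R m w') : w = w' := by
  have h1 := h.2 w' h'.1
  have h2 := h'.2 w h.1
  exact (keyM_inj U (le_antisymm h2 h1)).symm ▸ rfl

lemma proposes_exists {R : Finset (Fin n × Fin n)} {m : Fin n}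
    (h : ∃ w, (m, w) ∉ R) : ∃ w, Proposes U R m w := by
  obtain ⟨w0, hw0⟩ := h
  have hne : (Finset.univ.filter (fun w => (m, w) ∉ R)).Nonempty :=
    ⟨w0, by simp [hw0]⟩
  obtain ⟨w, hw, hmax⟩ := Finset.exists_max_image _ (keyM U m) hne
  refine ⟨w, (Finset.mem_filter.mp hw).2, fun w' hw' => ?_⟩
  exact hmax w' (by simp [hw'])

lemma hold_exists {R : Finset (Fin n × Fin n)} {w : Fin n}
    (h : ∃ m0, Proposes U R m0 w) :
    ∃ m'', Proposes U R m'' w ∧ ∀ m', Proposes U R m' w → keyW V w m' ≤ keyW V w m'' := by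
  obtain ⟨m0, hm0⟩ := h
  have hne : (Finset.univ.filter (fun m' => Proposes U R m' w)).Nonempty :=
    ⟨m0, by simp [hm0]⟩
  obtain ⟨m'', hm, hmax⟩ := Finset.exists_max_image _ (keyW V w) hne
  refine ⟨m'', (Finset.mem_filter.mp hm).2, fun m' hm' => ?_⟩
  exact hmax m' (by simp [hm'])

lemma hold_persists {R : Finset (Fin n × Fin n)} {m'' w : Fin n}
    (h : Proposes U R m'' w)
    (hmax : ∀ m', Proposes U R m' w → keyW V w m' ≤ keyW V w m'') :
    Proposes U (step U V R) m'' w := by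
  constructor
  · intro hmem
    rcases Finset.mem_union.mp hmem with h1 | h1
    · exact h.1 h1
    · have : Rej U V R m'' w := (Finset.mem_filter.mp h1).2
      obtain ⟨m', hm', hlt⟩ := this.2
      exact absurd (hmax m' hm') (not_le.mpr hlt)
  · intro w' hw'
    have : (m'', w') ∉ R := fun hc => hw' (subset_step U V R hc)
    exact h.2 w' this

/-- Invariant: every rejected pair has a strictly better current proposer. -/
def Inv (R : Finset (Fin n × Fin n)) : Prop :=
  ∀ m w, (m, w) ∈ R → ∃ m', Proposes U R m' w ∧ keyW V w m < keyW V w m'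

lemma inv_empty : Inv U V (∅ : Finset (Fin n × Fin n)) := by
  intro m w h; simp at h

lemma inv_step {R : Finset (Fin n × Fin n)} (h : Inv U V R) : Inv U V (step U V R) := by
  intro m w hmem
  have hbase : ∃ m0, Proposes U R m0 w ∧ keyW V w m < keyW V w m0 := by
    rcases Finset.mem_union.mp hmem with h1 | h1
    · exact h m w h1
    · exact ((Finset.mem_filter.mp h1).2).2
  obtain ⟨m0, hm0, hlt⟩ := hbase
  obtain ⟨m'', hm'', hmax⟩ := hold_exists U V ⟨m0, hm0⟩
  exact ⟨m'', hold_persists U V hm'' hmax, lt_of_lt_of_le hlt (hmax m0 hm0)⟩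

lemma inv_iterate (k : ℕ) : Inv U V ((step U V)^[k] ∅) := by
  induction k with
  | zero => exact inv_empty U V
  | succ k ih =>
    rw [Function.iterate_succ_apply']
    exact inv_step U V ih

lemma card_growth (k : ℕ) :
    step U V ((step U V)^[k] ∅) = (step U V)^[k] ∅ ∨ k ≤ ((step U V)^[k] ∅).card := by
  induction k with
  | zero => exact Or.inr (Nat.zero_le _)
  | succ k ih =>
    rcases ih with hfix | hcard
    · left
      rw [Function.iterate_succ_apply', hfix, hfix]
    · by_cases hfix : step U V ((step U V)^[k] ∅) = (step U V)^[k] ∅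
      · left
        rw [Function.iterate_succ_apply', hfix, hfix]
      · right
        rw [Function.iterate_succ_apply']
        have hss : (step U V)^[k] ∅ ⊂ step U V ((step U V)^[k] ∅) :=
          (Finset.ssubset_iff_subset_ne).mpr ⟨subset_step U V _, fun h' => hfix h'.symm⟩
        have := Finset.card_lt_card hss
        omega

/-- The terminal rejection set. -/
noncomputable def Rfinal : Finset (Fin n × Fin n) := (step U V)^[n * n + 1] ∅

lemma Rfinal_fix : step U V (Rfinal U V) = Rfinal U V := by
  rcases card_growth U V (n * n + 1) with h | h
  · exact h
  · exfalso
    have hle : ((step U V)^[n * n + 1] (∅ : Finset (Fin n × Fin n))).card ≤ n * n := by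
      have := Finset.card_le_univ ((step U V)^[n * n + 1] (∅ : Finset (Fin n × Fin n)))
      simpa [Finset.card_univ] using this
    omega

lemma Rfinal_inv : Inv U V (Rfinal U V) := inv_iterate U V _

lemma no_rej : ∀ m w, ¬ Rej U V (Rfinal U V) m w := by
  intro m w hrej
  have hmem : (m, w) ∈ step U V (Rfinal U V) := by
    apply Finset.mem_union_right
    simp [hrej]
  rw [Rfinal_fix] at hmem
  exact hrej.1.1 hmem

lemma proposer_unique {m1 m2 w : Fin n}
    (h1 : Proposes U (Rfinal U V) m1 w) (h2 : Proposes U (Rfinal U V) m2 w) : m1 = m2 := by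
  rcases lt_trichotomy (keyW V w m1) (keyW V w m2) with h | h | h
  · exact absurd ⟨h1, m2, h2, h⟩ (no_rej U V m1 w)
  · exact keyW_inj V h
  · exact absurd ⟨h2, m1, h1, h⟩ (no_rej U V m2 w)

lemma all_propose : ∀ m, ∃ w, Proposes U (Rfinal U V) m w := by
  by_contra hc
  push_neg at hc
  obtain ⟨m, hm⟩ := hc
  have hall : ∀ w, (m, w) ∈ Rfinal U V := by
    intro w
    by_contra hw
    exact absurd (proposes_exists U ⟨w, hw⟩) (by push_neg; exact hm)
  choose f hf _ using fun w => Rfinal_inv U V m w (hall w)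
  have hinj : Function.Injective f := by
    intro w1 w2 he
    exact proposes_unique U (he ▸ hf w1) (hf w2)
  obtain ⟨w, hw⟩ := (Finite.injective_iff_surjective.mp hinj) m
  exact hm w (hw ▸ hf w)

/-- The partner of each man in the final stable matching. -/
noncomputable def partner (m : Fin n) : Fin n := Classical.choose (all_propose U V m)

lemma partner_proposes (m : Fin n) : Proposes U (Rfinal U V) m (partner U V m) :=
  Classical.choose_spec (all_propose U V m)

lemma partner_inj : Function.Injective (partner U V) := by
  intro m1 m2 h
  exact proposer_unique U V (h ▸ partner_proposes U V m1) (partner_proposes U V m2)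

lemma partner_surj : Function.Surjective (partner U V) :=
  Finite.injective_iff_surjective.mp (partner_inj U V)

/-- The stable matching produced by Gale–Shapley. -/
noncomputable def gsMatch : Fin n → Fin n → ℝ := fun m w => if w = partner U V m then 1 else 0

lemma gsMatch_rowsum (m : Fin n) : ∑ w, gsMatch U V m w = 1 := by
  simp [gsMatch]

lemma gsMatch_colsum (w : Fin n) : ∑ m, gsMatch U V m w = 1 := by
  obtain ⟨m0, hm0⟩ := partner_surj U V w
  rw [Finset.sum_eq_single m0]
  · simp [gsMatch, hm0]
  · intro m _ hne
    have : w ≠ partner U V m := by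
      intro h
      exact hne (partner_inj U V (by rw [hm0, ← h]))
    simp [gsMatch, this]
  · simp

lemma gsMatch_frac : IsFrac (gsMatch U V) := by
  refine ⟨fun m w => ?_, fun m => le_of_eq (gsMatch_rowsum U V m), fun w => le_of_eq (gsMatch_colsum U V w)⟩
  unfold gsMatch
  split <;> norm_num

lemma gsMatch_uM (m : Fin n) : uM U (gsMatch U V) m = U m (partner U V m) := by
  simp [uM, gsMatch, mul_ite]

lemma gsMatch_vW (w : Fin n) {m0 : Fin n} (hm0 : partner U V m0 = w) :
    vW V (gsMatch U V) w = V m0 w := by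
  unfold vW
  rw [Finset.sum_eq_single m0]
  · simp [gsMatch, hm0]
  · intro m _ hne
    have : w ≠ partner U V m := by
      intro h
      exact hne (partner_inj U V (by rw [hm0, ← h]))
    simp [gsMatch, this]
  · simp

lemma gsMatch_stable : IsStable U V (gsMatch U V) := by
  intro m w
  by_cases hR : (m, w) ∈ Rfinal U V
  · right
    obtain ⟨m', hm', hlt⟩ := Rfinal_inv U V m w hR
    have hpw : partner U V m' = w :=
      proposes_unique U (partner_proposes U V m') hm'
    rw [gsMatch_vW U V w hpw]
    exact keyW_lt_val V hlt
  · left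
    rw [gsMatch_uM U V m]
    exact keyM_le_val U ((partner_proposes U V m).2 w hR)

theorem exists_stable_matching : ∃ μ : Fin n → Fin n → ℝ, IsFrac μ ∧ IsStable U V μ :=
  ⟨gsMatch U V, gsMatch_frac U V, gsMatch_stable U V⟩

end SMC13

theorem stmt13 {n : ℕ} (U V : Fin n → Fin n → ℝ)
    (hU : ∀ m w, 0 ≤ U m w) (hV : ∀ m w, 0 ≤ V m w) :
    ∃ μ : Fin n → Fin n → ℝ, IsFrac μ ∧
      (∀ m w, U m w / 2 ≤ uM U μ m ∨ V m w / 2 ≤ vW V μ w) ∧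
      ∀ μ', IsFrac μ' → IsStable U V μ' → welfare U V μ' ≤ welfare U V μ := by
  classical
  -- the set of half-stable fractional matchings
  set S : Set (Fin n → Fin n → ℝ) :=
    {μ | IsFrac μ ∧ ∀ m w, U m w / 2 ≤ uM U μ m ∨ V m w / 2 ≤ vW V μ w} with hS
  -- continuity facts
  have huMc : ∀ m : Fin n, Continuous fun μ : Fin n → Fin n → ℝ => uM U μ m := by
    intro m
    unfold uM
    exact continuous_finset_sum _ fun w _ =>
      continuous_const.mul ((continuous_apply w).comp (continuous_apply m))
  have hvWc : ∀ w : Fin n, Continuous fun μ : Fin n → Fin n → ℝ => vW V μ w := by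
    intro w
    unfold vW
    exact continuous_finset_sum _ fun m _ =>
      continuous_const.mul ((continuous_apply w).comp (continuous_apply m))
  have hwelc : Continuous fun μ : Fin n → Fin n → ℝ => welfare U V μ := by
    unfold welfare
    exact ((continuous_finset_sum _ fun m _ => huMc m).add
      (continuous_finset_sum _ fun w _ => hvWc w))
  -- S is closed
  have hSclosed : IsClosed S := by
    have h1 : IsClosed {μ : Fin n → Fin n → ℝ | IsFrac μ} := by
      have : {μ : Fin n → Fin n → ℝ | IsFrac μ} =
          (⋂ m, ⋂ w, {μ : Fin n → Fin n → ℝ | 0 ≤ μ m w}) ∩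
          ((⋂ m, {μ : Fin n → Fin n → ℝ | ∑ w, μ m w ≤ 1}) ∩
           (⋂ w, {μ : Fin n → Fin n → ℝ | ∑ m, μ m w ≤ 1})) := by
        ext μ
        simp only [Set.mem_setOf_eq, Set.mem_inter_iff, Set.mem_iInter, IsFrac]
      rw [this]
      refine IsClosed.inter ?_ (IsClosed.inter ?_ ?_)
      · exact isClosed_iInter fun m => isClosed_iInter fun w =>
          isClosed_le continuous_const ((continuous_apply w).comp (continuous_apply m))
      · exact isClosed_iInter fun m => isClosed_le
          (continuous_finset_sum _ fun w _ => (continuous_apply w).comp (continuous_apply m))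
          continuous_const
      · exact isClosed_iInter fun w => isClosed_le
          (continuous_finset_sum _ fun m _ => (continuous_apply w).comp (continuous_apply m))
          continuous_const
    have h2 : IsClosed {μ : Fin n → Fin n → ℝ |
        ∀ m w, U m w / 2 ≤ uM U μ m ∨ V m w / 2 ≤ vW V μ w} := by
      have : {μ : Fin n → Fin n → ℝ | ∀ m w, U m w / 2 ≤ uM U μ m ∨ V m w / 2 ≤ vW V μ w} =
          ⋂ m, ⋂ w, ({μ : Fin n → Fin n → ℝ | U m w / 2 ≤ uM U μ m} ∪
            {μ : Fin n → Fin n → ℝ | V m w / 2 ≤ vW V μ w}) := by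
        ext μ
        simp [Set.mem_iInter]
      rw [this]
      exact isClosed_iInter fun m => isClosed_iInter fun w =>
        IsClosed.union (isClosed_le continuous_const (huMc m))
          (isClosed_le continuous_const (hvWc w))
    exact h1.inter h2
  -- S is contained in a compact box
  have hbox : IsCompact (Set.univ.pi fun _ : Fin n => Set.univ.pi fun _ : Fin n => Set.Icc (0:ℝ) 1) :=
    isCompact_univ_pi fun m => isCompact_univ_pi fun w => isCompact_Icc
  have hsub : S ⊆ Set.univ.pi fun _ : Fin n => Set.univ.pi fun _ : Fin n => Set.Icc (0:ℝ) 1 := by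
    intro μ hμ
    obtain ⟨⟨hpos, hrow, _⟩, _⟩ := hμ
    intro m _
    intro w _
    refine ⟨hpos m w, ?_⟩
    calc μ m w ≤ ∑ w', μ m w' := Finset.single_le_sum (fun i _ => hpos m i) (Finset.mem_univ w)
    _ ≤ 1 := hrow m
  have hScompact : IsCompact S := hbox.of_isClosed_subset hSclosed hsub
  -- S is nonempty: a stable matching is half-stable
  have half_of_stable : ∀ μ, IsFrac μ → IsStable U V μ → μ ∈ S := by
    intro μ hf hs
    refine ⟨hf, fun m w => ?_⟩
    rcases hs m w with h | h
    · exact Or.inl (le_trans (by linarith [hU m w]) h)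
    · exact Or.inr (le_trans (by linarith [hV m w]) h)
  obtain ⟨μ0, hμ0f, hμ0s⟩ := SMC13.exists_stable_matching U V
  have hne : S.Nonempty := ⟨μ0, half_of_stable μ0 hμ0f hμ0s⟩
  obtain ⟨μ, hμS, hmax⟩ := hScompact.exists_isMaxOn hne hwelc.continuousOn
  refine ⟨μ, hμS.1, hμS.2, fun μ' hf' hs' => ?_⟩
  exact hmax (half_of_stable μ' hf' hs')
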